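/- For positive integers p, l_1, l_2 and nonnegative integers m, n_1, n_2: z_p^m * z_{l_1} z_p^{n_1} z_{l_2} z_p^{n_2} = Σ_{0 ≤ i_1 ≤ i_2 ≤ m} (z_p^{i_1} z_{l_1} + z_p^{i_1-1} z_{p+l_1}) [ (z_p^{i_2-i_1} * z_p^{n_1}) z_{l_2} + (z_p^{i_2-i_1-1} * z_p^{n_1}) z_{p+l_2} ] (z_p^{m-i_2} * z_p^{n_2}), with the convention z_p^{-1} = 0. -/
import Mathlib


open MonoidAlgebra Finset

abbrev H : Type := MonoidAlgebra ℚ (FreeMonoid ℕ+)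

noncomputable def word (w : List ℕ+) : H := MonoidAlgebra.single (FreeMonoid.ofList w) 1

noncomputable def z (k : ℕ+) : H := word [k]

noncomputable def st : List ℕ+ → List ℕ+ → H
  | [], w => word w
  | k :: w1, [] => word (k :: w1)
  | k :: w1, l :: w2 =>
      z k * st w1 (l :: w2) + z l * st (k :: w1) w2 + z (k + l) * st w1 w2
termination_by a b => a.length + b.length
decreasing_by all_goals (simp; try omega)

lemma word_nil : word [] = 1 := rfl
lemma word_append (u v : List ℕ+) : word (u ++ v) = word u * word v := by
  unfold word; rw [MonoidAlgebra.single_mul_single, one_mul]; rfl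
lemma word_cons (a : ℕ+) (w : List ℕ+) : word (a :: w) = z a * word w := by
  show word ([a] ++ w) = _; rw [word_append]; rfl
lemma st_nil_left (w : List ℕ+) : st [] w = word w := by simp [st]
lemma st_nil_right (w : List ℕ+) : st w [] = word w := by cases w <;> simp [st]
lemma st_cons_cons (k l : ℕ+) (w1 w2 : List ℕ+) :
    st (k :: w1) (l :: w2) =
      z k * st w1 (l :: w2) + z l * st (k :: w1) w2 + z (k + l) * st w1 w2 := by
  rw [st]

lemma st_nil_cons (a : ℕ+) (w : List ℕ+) : st [] (a::w) = z a * st [] w := by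
  rw [st_nil_left, st_nil_left, word_cons]

lemma coeff_step (p l u0 : ℕ+) (u' : List ℕ+) (j : ℕ) :
    z p * (st (List.replicate j p) (u0::u') * z l
        + if 1 ≤ j then st (List.replicate (j-1) p) (u0::u') * z (p+l) else 0)
    + z u0 * (st (List.replicate (j+1) p) u' * z l
        + if 1 ≤ j+1 then st (List.replicate j p) u' * z (p+l) else 0)
    + z (p+u0) * (st (List.replicate j p) u' * z l
        + if 1 ≤ j then st (List.replicate (j-1) p) u' * z (p+l) else 0)
    = st (List.replicate (j+1) p) (u0::u') * z l
        + if 1 ≤ j+1 then st (List.replicate j p) (u0::u') * z (p+l) else 0 := by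
  cases j with
  | zero =>
      simp only [List.replicate_succ, List.replicate_zero, st_cons_cons,
        if_pos (by omega : (1:ℕ) ≤ 1), if_neg (by omega : ¬ (1:ℕ) ≤ 0),
        st_nil_cons]
      noncomm_ring
  | succ k =>
      simp only [List.replicate_succ, st_cons_cons, Nat.succ_sub_one,
        if_pos (by omega : (1:ℕ) ≤ k+1), if_pos (by omega : (1:ℕ) ≤ k+2)]
      noncomm_ring

lemma word_single (a : ℕ+) : word [a] = z a := rfl

lemma key (p l : ℕ+) (v : List ℕ+) :
    ∀ (N M : ℕ) (u : List ℕ+), M + u.length ≤ N →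
    st (List.replicate M p) (u ++ l :: v) =
      ∑ j ∈ range (M+1),
        (st (List.replicate j p) u * z l
          + if 1 ≤ j then st (List.replicate (j-1) p) u * z (p+l) else 0)
        * st (List.replicate (M-j) p) v := by
  intro N
  induction N with
  | zero =>
      intro M u h
      have hM : M = 0 := by omega
      have hu : u = [] := by cases u with
        | nil => rfl
        | cons a b => simp at h
      subst hM; subst hu
      simp [st_nil_left, word_append, word_cons, word_nil, mul_assoc]
  | succ N ih =>
      intro M u h
      match M, u with
      | 0, u =>
          simp [st_nil_left, word_append, word_cons, word_nil, mul_assoc]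
      | M'+1, [] =>
          have h1 := ih M' [] (by simp at h ⊢; omega)
          simp only [List.nil_append] at h1 ⊢
          rw [List.replicate_succ, st_cons_cons, h1, mul_sum]
          rw [sum_range_succ' _ M']
          rw [sum_range_succ' _ (M'+1), sum_range_succ' _ M']
          have hterm : ∀ j ∈ range M',
              z p * ((st (List.replicate (j+1) p) [] * z l
                + if 1 ≤ j+1 then st (List.replicate (j+1-1) p) [] * z (p+l) else 0)
                * st (List.replicate (M'-(j+1)) p) v)
              = (st (List.replicate (j+1+1) p) [] * z l
                + if 1 ≤ j+1+1 then st (List.replicate (j+1+1-1) p) [] * z (p+l) else 0)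
                * st (List.replicate (M'+1-(j+1+1)) p) v := by
            intro j hj
            have e1 : M' + 1 - (j+1+1) = M' - (j+1) := by omega
            simp only [e1, Nat.add_sub_cancel, if_pos (by omega : (1:ℕ) ≤ j+1),
              if_pos (by omega : (1:ℕ) ≤ j+2), st_nil_right, List.replicate_succ, word_cons]
            noncomm_ring
          rw [Finset.sum_congr rfl hterm]
          simp only [Nat.sub_zero, Nat.add_sub_cancel, Nat.sub_self,
            if_pos (by omega : (1:ℕ) ≤ 1), if_neg (by omega : ¬ (1:ℕ) ≤ 0),
            List.replicate_succ, List.replicate_zero, st_nil_right, word_cons, word_nil]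
          noncomm_ring
      | M'+1, u0::u' =>
          have h1 := ih M' (u0::u') (by simp at h ⊢; omega)
          have h2 := ih (M'+1) u' (by simp at h ⊢; omega)
          have h3 := ih M' u' (by simp at h ⊢; omega)
          simp only [List.cons_append] at h1 h2 h3 ⊢
          rw [List.replicate_succ] at h2
          rw [List.replicate_succ, st_cons_cons, h1, h2, h3, mul_sum, mul_sum, mul_sum]
          rw [sum_range_succ' _ (M'+1), sum_range_succ' _ (M'+1)]
          have hterm : ∀ j ∈ range (M'+1),
              z p * ((st (List.replicate j p) (u0::u') * z l
                + if 1 ≤ j then st (List.replicate (j-1) p) (u0::u') * z (p+l) else 0)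
                * st (List.replicate (M'-j) p) v)
              + z u0 * ((st (List.replicate (j+1) p) u' * z l
                + if 1 ≤ j+1 then st (List.replicate (j+1-1) p) u' * z (p+l) else 0)
                * st (List.replicate (M'+1-(j+1)) p) v)
              + z (p+u0) * ((st (List.replicate j p) u' * z l
                + if 1 ≤ j then st (List.replicate (j-1) p) u' * z (p+l) else 0)
                * st (List.replicate (M'-j) p) v)
              = (st (List.replicate (j+1) p) (u0::u') * z l
                + if 1 ≤ j+1 then st (List.replicate (j+1-1) p) (u0::u') * z (p+l) else 0)
                * st (List.replicate (M'+1-(j+1)) p) v := by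
            intro j hj
            have e1 : M' + 1 - (j+1) = M' - j := by omega
            rw [e1, Nat.add_sub_cancel, ← coeff_step p l u0 u' j]
            noncomm_ring
          rw [Finset.sum_congr rfl (fun j hj => (hterm j hj).symm),
            Finset.sum_add_distrib, Finset.sum_add_distrib]
          have hz : (st (List.replicate 0 p) (u0::u') * z l
              + if 1 ≤ 0 then st (List.replicate (0-1) p) (u0::u') * z (p+l) else 0)
              * st (List.replicate (M'+1-0) p) v
              = z u0 * ((st (List.replicate 0 p) u' * z l
              + if 1 ≤ 0 then st (List.replicate (0-1) p) u' * z (p+l) else 0)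
              * st (List.replicate (M'+1-0) p) v) := by
            simp only [List.replicate_zero, st_nil_cons, if_neg (by omega : ¬ (1:ℕ) ≤ 0)]
            noncomm_ring
          rw [hz]
          abel

lemma tri {β : Type*} [AddCommMonoid β] (m : ℕ) (f : ℕ → ℕ → β) :
    ∑ i1 ∈ range (m+1), ∑ j ∈ range (m - i1 + 1), f i1 (i1 + j)
    = ∑ i2 ∈ range (m+1), ∑ i1 ∈ range (i2+1), f i1 i2 := by
  rw [Finset.sum_sigma', Finset.sum_sigma']
  apply Finset.sum_nbij' (i := fun x => ⟨x.1 + x.2, x.1⟩) (j := fun x => ⟨x.2, x.1 - x.2⟩)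
  · intro a ha; simp only [Finset.mem_sigma, mem_range] at ha ⊢; omega
  · intro a ha; simp only [Finset.mem_sigma, mem_range] at ha ⊢; omega
  · intro a ha; simp only [Finset.mem_sigma, mem_range] at ha
    ext <;> simp <;> try omega
  · intro a ha; simp only [Finset.mem_sigma, mem_range] at ha
    ext <;> simp <;> try omega
  · intro a ha
    show f a.fst (a.fst + a.snd) = f a.fst (a.fst + a.snd)
    rfl

theorem st_zero_twotwo (p l1 l2 : ℕ+) (m n1 n2 : ℕ) :
    st (List.replicate m p) (l1 :: (List.replicate n1 p ++ l2 :: List.replicate n2 p)) =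
      ∑ i2 ∈ Finset.range (m + 1), ∑ i1 ∈ Finset.range (i2 + 1),
        (word (List.replicate i1 p) * z l1
            + if 1 ≤ i1 then word (List.replicate (i1 - 1) p) * z (p + l1) else 0)
        * (st (List.replicate (i2 - i1) p) (List.replicate n1 p) * z l2
            + if i1 < i2 then
                st (List.replicate (i2 - i1 - 1) p) (List.replicate n1 p) * z (p + l2)
              else 0)
        * st (List.replicate (m - i2) p) (List.replicate n2 p) := by
  have h1 := key p l1 (List.replicate n1 p ++ l2 :: List.replicate n2 p) m m [] (by simp)
  simp only [List.nil_append] at h1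
  rw [h1]
  have h2 : ∀ i1 ∈ range (m+1),
      (st (List.replicate i1 p) [] * z l1
        + if 1 ≤ i1 then st (List.replicate (i1-1) p) [] * z (p+l1) else 0)
      * st (List.replicate (m - i1) p) (List.replicate n1 p ++ l2 :: List.replicate n2 p)
      = ∑ j ∈ range (m - i1 + 1),
        (word (List.replicate i1 p) * z l1
            + if 1 ≤ i1 then word (List.replicate (i1 - 1) p) * z (p + l1) else 0)
        * (st (List.replicate (i1 + j - i1) p) (List.replicate n1 p) * z l2
            + if i1 < i1 + j then
                st (List.replicate (i1 + j - i1 - 1) p) (List.replicate n1 p) * z (p + l2)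
              else 0)
        * st (List.replicate (m - (i1 + j)) p) (List.replicate n2 p) := by
    intro i1 _
    rw [key p l2 (List.replicate n2 p) (m - i1 + n1) (m - i1) (List.replicate n1 p)
      (by simp), mul_sum]
    apply sum_congr rfl
    intro j _
    simp only [st_nil_right, Nat.add_sub_cancel_left, ← Nat.sub_sub,
      show (i1 < i1 + j) = (1 ≤ j) from propext (by omega), mul_assoc]
  rw [sum_congr rfl h2, tri m (fun i1 i2 =>
        (word (List.replicate i1 p) * z l1
            + if 1 ≤ i1 then word (List.replicate (i1 - 1) p) * z (p + l1) else 0)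
        * (st (List.replicate (i2 - i1) p) (List.replicate n1 p) * z l2
            + if i1 < i2 then
                st (List.replicate (i2 - i1 - 1) p) (List.replicate n1 p) * z (p + l2)
              else 0)
        * st (List.replicate (m - i2) p) (List.replicate n2 p))]
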